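/- Let X be a 2-dimensional complex inner product space and A : X → X a conjugate-linear isometric involution. Then there exists ψ ∈ X such that {ψ, A(ψ)} is an orthonormal basis of X. -/

import Mathlib

open ComplexConjugate

section Aux

variable {X : Type*} [NormedAddCommGroup X] [InnerProductSpace ℂ X]

local notation "⟪" x ", " y "⟫" => @inner ℂ _ _ x y

lemma aux_inner (A : X → X)
    (hAadd : ∀ x y, A (x + y) = A x + A y)
    (hAsmul : ∀ (c : ℂ) (x : X), A (c • x) = (conj c) • A x)
    (hAisom : ∀ x, ‖A x‖ = ‖x‖) (x y : X) :
    ⟪A x, A y⟫ = ⟪y, x⟫ := by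
  have hneg : ∀ v : X, A (-v) = -A v := by
    intro v
    simpa using hAsmul (-1) v
  have hsub : ∀ u v : X, A (u - v) = A u - A v := by
    intro u v
    rw [sub_eq_add_neg, hAadd, hneg, sub_eq_add_neg]
  have h1 : ‖A x + A y‖ = ‖x + y‖ := by rw [← hAadd, hAisom]
  have h2 : ‖A x - A y‖ = ‖x - y‖ := by rw [← hsub, hAisom]
  have h3 : A x - Complex.I • A y = A (x + Complex.I • y) := by
    rw [hAadd, hAsmul, Complex.conj_I, neg_smul, sub_eq_add_neg]
  have h4 : A x + Complex.I • A y = A (x - Complex.I • y) := by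
    rw [hsub, hAsmul, Complex.conj_I, neg_smul, sub_neg_eq_add]
  rw [← inner_conj_symm y x, inner_eq_sum_norm_sq_div_four, inner_eq_sum_norm_sq_div_four,
    RCLike.I_to_complex, h3, h4]
  simp only [h1, h2, hAisom]
  simp only [map_div₀, map_add, map_sub, map_mul, map_pow, Complex.conj_ofReal,
    RCLike.conj_ofReal, Complex.conj_I, map_ofNat]
  ring

lemma aux_fixed (A : X → X)
    (hAadd : ∀ x y, A (x + y) = A x + A y)
    (hAsmul : ∀ (c : ℂ) (x : X), A (c • x) = (conj c) • A x)
    (hAinv : ∀ x, A (A x) = x)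
    (K : Submodule ℂ X) (hK : ∀ x ∈ K, A x ∈ K)
    (z : X) (hzK : z ∈ K) (hz0 : z ≠ 0) :
    ∃ e, e ∈ K ∧ A e = e ∧ ‖e‖ = 1 := by
  obtain ⟨w, hwK, hw0, hwA⟩ : ∃ w, w ∈ K ∧ w ≠ 0 ∧ A w = w := by
    by_cases h : z + A z = 0
    · have hAz : A z = -z := by
        rw [← neg_eq_of_add_eq_zero_right h]
      refine ⟨Complex.I • z, K.smul_mem _ hzK, ?_, ?_⟩
      · simp [smul_eq_zero, hz0, Complex.I_ne_zero]
      · rw [hAsmul, Complex.conj_I, hAz]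
        simp
    · exact ⟨z + A z, K.add_mem hzK (hK z hzK), h,
        by rw [hAadd, hAinv, add_comm]⟩
  refine ⟨((‖w‖⁻¹ : ℝ) : ℂ) • w, K.smul_mem _ hwK, ?_, ?_⟩
  · rw [hAsmul, Complex.conj_ofReal, hwA]
  · have hw0' : ‖w‖ ≠ 0 := norm_ne_zero_iff.mpr hw0
    rw [norm_smul, Complex.norm_real, Real.norm_eq_abs,
      abs_of_nonneg (by positivity), inv_mul_cancel₀ hw0']

end Aux

/-- On a 2-dimensional complex inner product space, a conjugate-linear isometric
involution `A` admits an orthonormal basis of the form `{ψ, Aψ}`. -/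
theorem stmt12 {X : Type*} [NormedAddCommGroup X] [InnerProductSpace ℂ X]
    (hdim : Module.finrank ℂ X = 2)
    (A : X → X)
    (hAadd : ∀ x y, A (x + y) = A x + A y)
    (hAsmul : ∀ (c : ℂ) (x : X), A (c • x) = (conj c) • A x)
    (hAisom : ∀ x, ‖A x‖ = ‖x‖)
    (hAinv : ∀ x, A (A x) = x) :
    ∃ ψ : X, Orthonormal ℂ ![ψ, A ψ] ∧
      Submodule.span ℂ {ψ, A ψ} = ⊤ := by
  haveI : FiniteDimensional ℂ X := FiniteDimensional.of_finrank_eq_succ (n := 1) hdim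
  haveI : Nontrivial X := Module.nontrivial_of_finrank_pos (R := ℂ) (by omega)
  obtain ⟨z, hz0⟩ := exists_ne (0 : X)
  -- first fixed unit vector
  obtain ⟨e1, -, he1A, he1n⟩ :=
    aux_fixed A hAadd hAsmul hAinv ⊤ (fun x _ => trivial) z trivial hz0
  have he10 : e1 ≠ 0 := by
    intro h; rw [h, norm_zero] at he1n; norm_num at he1n
  -- the orthogonal complement of e1 is A-invariant and nontrivial
  set K : Submodule ℂ X := (ℂ ∙ e1)ᗮ with hKdef
  have hKinv : ∀ x ∈ K, A x ∈ K := by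
    intro u hu
    rw [Submodule.mem_orthogonal_singleton_iff_inner_right] at hu ⊢
    have h := aux_inner A hAadd hAsmul hAisom e1 u
    rw [he1A] at h
    rw [h, ← inner_conj_symm, hu, map_zero]
  have hKrank : 0 < Module.finrank ℂ ((ℂ ∙ e1)ᗮ) := by
    have h := Submodule.finrank_add_finrank_orthogonal (K := ℂ ∙ e1)
    rw [finrank_span_singleton he10, hdim] at h
    omega
  obtain ⟨⟨z2, hz2K⟩, hz2⟩ := Module.finrank_pos_iff_exists_ne_zero.mp hKrank
  have hz20 : z2 ≠ 0 := by
    simpa [Submodule.mk_eq_zero] using hz2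
  -- second fixed unit vector, orthogonal to the first
  obtain ⟨e2, he2K, he2A, he2n⟩ :=
    aux_fixed A hAadd hAsmul hAinv K hKinv z2 hz2K hz20
  have h12 : @inner ℂ _ _ e1 e2 = 0 :=
    Submodule.mem_orthogonal_singleton_iff_inner_right.mp he2K
  have h21 : @inner ℂ _ _ e2 e1 = 0 := by
    rw [← inner_conj_symm, h12, map_zero]
  have h11 : @inner ℂ _ _ e1 e1 = 1 := by
    rw [@inner_self_eq_norm_sq_to_K ℂ, he1n]; norm_num
  have h22 : @inner ℂ _ _ e2 e2 = 1 := by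
    rw [@inner_self_eq_norm_sq_to_K ℂ, he2n]; norm_num
  -- the vector ψ
  set s : ℂ := ((Real.sqrt 2 : ℝ) : ℂ) with hsdef
  have hs2 : s ^ 2 = 2 := by
    rw [hsdef, ← Complex.ofReal_pow, Real.sq_sqrt (by norm_num : (2:ℝ) ≥ 0)]
    norm_num
  have hs0 : s ≠ 0 := by
    intro h; rw [h] at hs2; norm_num at hs2
  refine ⟨s⁻¹ • (e1 + Complex.I • e2), ?_⟩
  set ψ : X := s⁻¹ • (e1 + Complex.I • e2) with hψdef
  have hAψ : A ψ = s⁻¹ • (e1 - Complex.I • e2) := by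
    rw [hψdef, hAsmul, hAadd, hAsmul, he1A, he2A, Complex.conj_I, neg_smul,
      ← sub_eq_add_neg]
    congr 1
    rw [hsdef, ← Complex.ofReal_inv, Complex.conj_ofReal]
  have hconjsinv : conj s⁻¹ = s⁻¹ := by
    rw [hsdef, ← Complex.ofReal_inv, Complex.conj_ofReal]
  have key1 : @inner ℂ _ _ ψ ψ = 1 := by
    rw [hψdef]
    simp only [inner_smul_left, inner_smul_right, inner_add_left, inner_add_right,
      inner_sub_left, inner_sub_right, h11, h22, h12, h21, hconjsinv, Complex.conj_I]
    field_simp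
    linear_combination (-1 : ℂ) * hs2 - Complex.I_sq
  have key2 : @inner ℂ _ _ ψ (A ψ) = 0 := by
    rw [hψdef, hAψ]
    simp only [inner_smul_left, inner_smul_right, inner_add_left, inner_add_right,
      inner_sub_left, inner_sub_right, h11, h22, h12, h21, hconjsinv, Complex.conj_I]
    ring_nf
    rw [Complex.I_sq]
    ring
  have key3 : @inner ℂ _ _ (A ψ) ψ = 0 := by
    rw [← inner_conj_symm, key2, map_zero]
  have key4 : @inner ℂ _ _ (A ψ) (A ψ) = 1 := by
    rw [aux_inner A hAadd hAsmul hAisom, key1]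
  have hn1 : ‖ψ‖ = 1 := by
    rw [@norm_eq_sqrt_re_inner ℂ, key1]; simp
  have hn2 : ‖A ψ‖ = 1 := by rw [hAisom, hn1]
  have hON : Orthonormal ℂ ![ψ, A ψ] := by
    rw [orthonormal_iff_ite]
    intro i j
    fin_cases i <;> fin_cases j <;>
      simp [key1, key2, key3, key4, hn1, hn2]
  refine ⟨hON, ?_⟩
  have hrange : Set.range ![ψ, A ψ] = {ψ, A ψ} :=
    Matrix.range_cons_cons_empty ψ (A ψ) _
  rw [← hrange]
  exact hON.linearIndependent.span_eq_top_of_card_eq_finrank (by simp [hdim])
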